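/- Let r ∈ ℕ, r ≥ 1, and let L be a loss function satisfying Assumptions 1 and 3. If there exist A ∈ ℝ and B, s ∈ ℝ with B·s < 0 and s < r such that lim_{x→0⁺} (L(x) − A)/x^s = B, then there exists ξ ∈ (0,∞) such that ∫_ξ^∞ (L(ξ) − L(x))/x^{r+1} dx > 0. -/

import Mathlib

open MeasureTheory Filter Set Topology Asymptotics
open scoped ENNReal NNReal BigOperators

/-- Assumption 1: bounded variation on every compact subinterval of `(0,∞)`. -/
def Assumption1 (L : ℝ → ℝ) : Prop :=
  ∀ x₁ x₂ : ℝ, 0 < x₁ → x₁ < x₂ → BoundedVariationOn L (Set.Icc x₁ x₂)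

/-- Assumption 3: `L(x) = O(x^K)` as `x → 0⁺` for some `K ∈ ℝ`, and
`L(x) = O(x^K')` as `x → ∞` for some `K' < r`. -/
def Assumption3 (r : ℕ) (L : ℝ → ℝ) : Prop :=
  (∃ K : ℝ, L =O[𝓝[>] (0 : ℝ)] fun x : ℝ => x ^ K) ∧
  (∃ K' : ℝ, K' < (r : ℝ) ∧ L =O[atTop] fun x : ℝ => x ^ K')

lemma aux1 (L : ℝ → ℝ) (h1 : Assumption1 L) {a b : ℝ} (ha : 0 < a) (hab : a < b) :
    IntegrableOn L (Set.Icc a b) := by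
  obtain ⟨p, q, hp, hq, hpq⟩ :=
    (h1 a b ha hab).locallyBoundedVariationOn.exists_monotoneOn_sub_monotoneOn
  rw [hpq]
  exact (hp.integrableOn_isCompact isCompact_Icc).sub (hq.integrableOn_isCompact isCompact_Icc)

lemma aux2 (L : ℝ → ℝ) (h1 : Assumption1 L) {a : ℝ} (ha : 0 < a) :
    AEStronglyMeasurable L (volume.restrict (Set.Ioi a)) := by
  have hsub : Set.Ioi a ⊆ ⋃ n : ℕ, Set.Icc a (a + (n + 1)) := by
    intro x hx
    obtain ⟨n, hn⟩ := exists_nat_ge (x - a)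
    exact Set.mem_iUnion.2 ⟨n, le_of_lt hx, by linarith⟩
  have h : AEStronglyMeasurable L (volume.restrict (⋃ n : ℕ, Set.Icc a (a + (n + 1)))) := by
    rw [aestronglyMeasurable_iUnion_iff]
    intro n
    exact (aux1 L h1 ha (lt_add_of_pos_right a (by positivity))).aestronglyMeasurable
  exact h.mono_measure (Measure.restrict_mono hsub le_rfl)

lemma aux3 (r : ℕ) (L : ℝ → ℝ) (h1 : Assumption1 L) (h3 : Assumption3 r L)
    {ξ : ℝ} (hξ : 0 < ξ) :
    IntegrableOn (fun x => L x / x ^ (r + 1)) (Set.Ioi ξ) := by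
  obtain ⟨K', hK', hO⟩ := h3.2
  obtain ⟨C, hC⟩ := hO.bound
  obtain ⟨M0, hM0⟩ := eventually_atTop.1 hC
  obtain ⟨M, hM0le, hξM⟩ : ∃ M : ℝ, M0 ≤ M ∧ ξ < M :=
    ⟨max M0 (ξ + 1), le_max_left _ _, lt_of_lt_of_le (lt_add_one ξ) (le_max_right _ _)⟩
  have hMpos : 0 < M := hξ.trans hξM
  rw [← Set.Ioc_union_Ioi_eq_Ioi hξM.le, integrableOn_union]
  constructor
  · -- on Ioc ξ M
    have hLint : IntegrableOn L (Set.Ioc ξ M) :=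
      (aux1 L h1 hξ hξM).mono_set Set.Ioc_subset_Icc_self
    have hmeas : AEStronglyMeasurable (fun x : ℝ => (x ^ (r + 1))⁻¹)
        (volume.restrict (Set.Ioc ξ M)) :=
      ((measurable_id.pow_const (r + 1)).inv).aestronglyMeasurable
    have hbd : ∀ᵐ x ∂(volume.restrict (Set.Ioc ξ M)),
        ‖(x ^ (r + 1))⁻¹‖ ≤ (ξ ^ (r + 1))⁻¹ := by
      rw [ae_restrict_iff' measurableSet_Ioc]
      refine ae_of_all _ fun x hx => ?_
      have hx0 : 0 < x := hξ.trans hx.1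
      have h1' : (0:ℝ) < ξ ^ (r + 1) := by positivity
      have h2' : ξ ^ (r + 1) ≤ x ^ (r + 1) := pow_le_pow_left₀ hξ.le hx.1.le _
      rw [Real.norm_eq_abs, abs_of_pos (by positivity)]
      exact inv_anti₀ h1' h2'
    have := Integrable.bdd_mul hLint hmeas hbd
    exact this.congr (ae_of_all _ fun x => (mul_comm _ _).trans (div_eq_mul_inv _ _).symm)
  · -- on Ioi M
    have hbase : IntegrableOn (fun x : ℝ => C * x ^ (K' - ((r : ℝ) + 1))) (Set.Ioi M) :=
      (integrableOn_Ioi_rpow_of_lt (by linarith) hMpos).const_mul C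
    have hmL : AEStronglyMeasurable (fun x : ℝ => L x / x ^ (r + 1))
        (volume.restrict (Set.Ioi M)) := by
      have h2 : AEMeasurable (fun x : ℝ => x ^ (r + 1))
          (volume.restrict (Set.Ioi M)) :=
        (measurable_id.pow_const (r + 1)).aemeasurable
      exact ((aux2 L h1 hMpos).aemeasurable.div h2).aestronglyMeasurable
    refine Integrable.mono' hbase hmL ?_
    rw [ae_restrict_iff' measurableSet_Ioi]
    refine ae_of_all _ fun x hx => ?_
    have hx0 : 0 < x := hMpos.trans hx
    have hxM0 : M0 ≤ x := le_trans hM0le (le_of_lt hx)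
    have hb := hM0 x hxM0
    have hxp : (0:ℝ) < x ^ (r + 1) := by positivity
    have hrw : x ^ (r + 1) = x ^ ((r : ℝ) + 1) := by
      rw [← Real.rpow_natCast x (r + 1)]; push_cast; ring_nf
    rw [norm_div, Real.norm_eq_abs (x ^ (r+1)), abs_of_pos hxp]
    have hnorm : ‖x ^ K'‖ = x ^ K' := Real.norm_eq_abs _ ▸ abs_of_pos (Real.rpow_pos_of_pos hx0 _)
    rw [hnorm] at hb
    calc ‖L x‖ / x ^ (r + 1) ≤ C * x ^ K' / x ^ (r + 1) := by gcongr
      _ = C * x ^ (K' - ((r : ℝ) + 1)) := by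
          rw [hrw, mul_div_assoc, ← Real.rpow_sub hx0]

/-- Proposition 2: if `(L(x) − A)/x^s → B` as `x → 0⁺` with
`B·s < 0` and `s < r`, then there is `ξ > 0` with
`∫_ξ^∞ (L(ξ) − L(x))/x^(r+1) dx > 0`. -/
theorem stmt2 (r : ℕ) (hr : 1 ≤ r) (L : ℝ → ℝ) (hL0 : ∀ x : ℝ, 0 ≤ L x)
    (h1 : Assumption1 L) (h3 : Assumption3 r L)
    (A B s : ℝ) (hBs : B * s < 0) (hs : s < (r : ℝ))
    (hlim : Tendsto (fun x : ℝ => (L x - A) / x ^ s) (𝓝[>] (0 : ℝ)) (𝓝 B)) :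
    ∃ ξ : ℝ, 0 < ξ ∧ 0 < ∫ x in Set.Ioi ξ, (L ξ - L x) / x ^ (r + 1) := by
  set p : ℝ := (r : ℝ) with hpdef
  have hp1 : (1:ℝ) ≤ p := by rw [hpdef]; exact_mod_cast hr
  have hp0 : (0:ℝ) < p := by linarith
  have hps : 0 < p - s := by linarith
  have h2ps : 0 < 2 * p - s := by linarith
  have hBs' : 0 < -(B * s) := by linarith
  set ε : ℝ := -(B * s) / (2 * (2 * p - s)) with hεdef
  have hε0 : 0 < ε := by positivity
  set c : ℝ := (B - ε) / p - (B + ε) / (p - s) with hcdef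
  have hc0 : 0 < c := by
    have hcc : c = -(B * s) / (2 * (p * (p - s))) := by
      rw [hcdef, hεdef]
      field_simp
      ring
    rw [hcc]; positivity
  obtain ⟨δ, hδ0, hδ⟩ := Metric.tendsto_nhdsWithin_nhds.mp hlim ε hε0
  have hbound : ∀ x : ℝ, 0 < x → x < δ →
      (B - ε) * x ^ s ≤ L x - A ∧ L x - A ≤ (B + ε) * x ^ s := by
    intro x hx0 hxδ
    have hxs : (0:ℝ) < x ^ s := Real.rpow_pos_of_pos hx0 s
    have hd := hδ (Set.mem_Ioi.2 hx0) (by rwa [Real.dist_eq, sub_zero, abs_of_pos hx0])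
    rw [Real.dist_eq] at hd
    have h1' := abs_lt.mp hd
    constructor
    · have h2' : B - ε ≤ (L x - A) / x ^ s := by linarith [h1'.1]
      calc (B - ε) * x ^ s ≤ ((L x - A) / x ^ s) * x ^ s :=
            mul_le_mul_of_nonneg_right h2' hxs.le
        _ = L x - A := div_mul_cancel₀ _ hxs.ne'
    · have h2' : (L x - A) / x ^ s ≤ B + ε := by linarith [h1'.2]
      calc L x - A = ((L x - A) / x ^ s) * x ^ s := (div_mul_cancel₀ _ hxs.ne').symm
        _ ≤ (B + ε) * x ^ s := mul_le_mul_of_nonneg_right h2' hxs.le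
  set η : ℝ := δ / 2 with hηdef
  have hη0 : 0 < η := by positivity
  have hηδ : η < δ := by rw [hηdef]; linarith
  set T : ℝ := ∫ x in Set.Ioi η, (L x - A) / x ^ (r + 1) with hT
  set C' : ℝ := (B + ε) * η ^ (s - p) / (p - s) - T with hC'
  -- choose ξ small
  have h1t : Tendsto (fun x : ℝ => x ^ (s - p)) (𝓝[>] (0:ℝ)) atTop := by
    have h2t := (tendsto_rpow_atTop hps).comp tendsto_inv_nhdsGT_zero
    refine h2t.congr' ?_
    filter_upwards [self_mem_nhdsWithin] with x hx
    have hx0 : (0:ℝ) < x := hx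
    simp only [Function.comp_apply]
    rw [Real.inv_rpow hx0.le, ← Real.rpow_neg hx0.le, neg_sub]
  have htend : Tendsto (fun x : ℝ => c * x ^ (s - p) + C') (𝓝[>] (0:ℝ)) atTop :=
    tendsto_atTop_add_const_right _ C' (h1t.const_mul_atTop hc0)
  have hev : ∀ᶠ x in 𝓝[>] (0:ℝ), 0 < c * x ^ (s - p) + C' ∧ x ∈ Set.Ioo (0:ℝ) η :=
    (htend.eventually_gt_atTop 0).and (Ioo_mem_nhdsGT_of_mem ⟨le_rfl, hη0⟩)
  obtain ⟨ξ, hkey, hξ0, hξη⟩ := hev.exists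
  have hξδ : ξ < δ := hξη.trans hηδ
  refine ⟨ξ, hξ0, ?_⟩
  -- integrability facts
  have hIL : IntegrableOn (fun x => L x / x ^ (r + 1)) (Set.Ioi ξ) := aux3 r L h1 h3 hξ0
  have hIrpow : IntegrableOn (fun x : ℝ => x ^ (-(p + 1))) (Set.Ioi ξ) :=
    integrableOn_Ioi_rpow_of_lt (by linarith) hξ0
  have heqinv : ∀ x ∈ Set.Ioi ξ, x ^ (-(p + 1)) = 1 / x ^ (r + 1) := by
    intro x hx
    have hx0 : (0:ℝ) < x := hξ0.trans hx
    rw [one_div, ← Real.rpow_natCast x (r + 1), ← Real.rpow_neg hx0.le]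
    congr 1
    push_cast
    ring
  have hIinv : IntegrableOn (fun x : ℝ => 1 / x ^ (r + 1)) (Set.Ioi ξ) :=
    hIrpow.congr_fun heqinv measurableSet_Ioi
  have hIA : IntegrableOn (fun x : ℝ => A / x ^ (r + 1)) (Set.Ioi ξ) := by
    have h' := hIinv.const_mul A
    simpa only [mul_one_div, IntegrableOn] using h'
  have hILA : IntegrableOn (fun x => (L x - A) / x ^ (r + 1)) (Set.Ioi ξ) := by
    have h' := hIL.sub hIA
    simpa only [sub_div, Pi.sub_def] using h'
  have hconst : IntegrableOn (fun x : ℝ => (L ξ - A) * (1 / x ^ (r + 1))) (Set.Ioi ξ) :=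
    hIinv.const_mul _
  -- value of ∫ 1/x^(r+1)
  have hvalinv : ∫ x in Set.Ioi ξ, 1 / x ^ (r + 1) = ξ ^ (-p) / p := by
    rw [← setIntegral_congr_fun measurableSet_Ioi heqinv]
    rw [integral_Ioi_rpow_of_lt (by linarith) hξ0]
    rw [show -(p + 1) + 1 = -p by ring]
    rw [show (-ξ ^ (-p) / -p) = ξ ^ (-p) / p from neg_div_neg_eq _ _]
  -- split the integral
  have hsplit : ∫ x in Set.Ioi ξ, (L ξ - L x) / x ^ (r + 1)
      = (L ξ - A) * (ξ ^ (-p) / p) - ∫ x in Set.Ioi ξ, (L x - A) / x ^ (r + 1) := by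
    have heq : ∀ x : ℝ, (L ξ - L x) / x ^ (r + 1)
        = (L ξ - A) * (1 / x ^ (r + 1)) - (L x - A) / x ^ (r + 1) := by
      intro x
      rw [mul_one_div, div_sub_div_same]
      congr 1
      ring
    simp only [heq]
    rw [integral_sub hconst hILA, integral_const_mul, hvalinv]
  have hu : Set.Ioc ξ η ∪ Set.Ioi η = Set.Ioi ξ := Set.Ioc_union_Ioi_eq_Ioi hξη.le
  have hILA1 : IntegrableOn (fun x => (L x - A) / x ^ (r + 1)) (Set.Ioc ξ η) :=
    hILA.mono_set (by rw [← hu]; exact Set.subset_union_left)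
  have hILA2 : IntegrableOn (fun x => (L x - A) / x ^ (r + 1)) (Set.Ioi η) :=
    hILA.mono_set (by rw [← hu]; exact Set.subset_union_right)
  have htails : ∫ x in Set.Ioi ξ, (L x - A) / x ^ (r + 1)
      = (∫ x in Set.Ioc ξ η, (L x - A) / x ^ (r + 1)) + T := by
    rw [hT, ← setIntegral_union (Set.Ioc_disjoint_Ioi le_rfl) measurableSet_Ioi hILA1 hILA2, hu]
  -- bound the middle integral
  have hmid : ∫ x in Set.Ioc ξ η, (L x - A) / x ^ (r + 1)
      ≤ (B + ε) * ((η ^ (s - p) - ξ ^ (s - p)) / (s - p)) := by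
    have hcont : ContinuousOn (fun x : ℝ => x ^ (s - p - 1)) (Set.Icc ξ η) := by
      intro x hx
      exact (Real.continuousAt_rpow_const x _
        (Or.inl (ne_of_gt (hξ0.trans_le hx.1)))).continuousWithinAt
    have hint2 : IntegrableOn (fun x : ℝ => (B + ε) * x ^ (s - p - 1)) (Set.Ioc ξ η) :=
      ((hcont.integrableOn_Icc).mono_set Set.Ioc_subset_Icc_self).const_mul _
    have hptwise : ∀ x ∈ Set.Ioc ξ η,
        (L x - A) / x ^ (r + 1) ≤ (B + ε) * x ^ (s - p - 1) := by
      intro x hx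
      have hx0 : (0:ℝ) < x := hξ0.trans hx.1
      have hxδ : x < δ := lt_of_le_of_lt hx.2 hηδ
      have hub := (hbound x hx0 hxδ).2
      have hxp : (0:ℝ) < x ^ (r + 1) := by positivity
      calc (L x - A) / x ^ (r + 1) ≤ ((B + ε) * x ^ s) / x ^ (r + 1) := by
            exact (div_le_div_iff_of_pos_right hxp).mpr hub
        _ = (B + ε) * x ^ (s - p - 1) := by
            rw [mul_div_assoc]
            congr 1
            rw [← Real.rpow_natCast x (r + 1), ← Real.rpow_sub hx0]
            congr 1
            push_cast
            ring
    calc ∫ x in Set.Ioc ξ η, (L x - A) / x ^ (r + 1)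
        ≤ ∫ x in Set.Ioc ξ η, (B + ε) * x ^ (s - p - 1) :=
          setIntegral_mono_on hILA1 hint2 measurableSet_Ioc hptwise
      _ = (B + ε) * ∫ x in Set.Ioc ξ η, x ^ (s - p - 1) := integral_const_mul _ _
      _ = (B + ε) * ((η ^ (s - p) - ξ ^ (s - p)) / (s - p)) := by
          rw [← intervalIntegral.integral_of_le hξη.le]
          rw [integral_rpow (Or.inr ⟨by intro h; apply hps.ne'; linarith, by
            rw [Set.uIcc_of_le hξη.le]
            exact fun h => absurd h.1 (not_le.mpr hξ0)⟩)]
          rw [show s - p - 1 + 1 = s - p by ring]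
  have hlow : (B - ε) * ξ ^ s ≤ L ξ - A := (hbound ξ hξ0 hξδ).1
  have hxisp : ξ ^ s * ξ ^ (-p) = ξ ^ (s - p) := by
    rw [show s - p = s + -p from sub_eq_add_neg s p, Real.rpow_add hξ0]
  have hrp : (0:ℝ) < ξ ^ (-p) / p := by positivity
  have step1 : (B - ε) * ξ ^ (s - p) / p ≤ (L ξ - A) * (ξ ^ (-p) / p) := by
    have h' := mul_le_mul_of_nonneg_right hlow hrp.le
    calc (B - ε) * ξ ^ (s - p) / p = (B - ε) * ξ ^ s * (ξ ^ (-p) / p) := by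
          rw [← hxisp]; ring
      _ ≤ (L ξ - A) * (ξ ^ (-p) / p) := h'
  have halg : c * ξ ^ (s - p) + C'
      = (B - ε) * ξ ^ (s - p) / p
        - ((B + ε) * ((η ^ (s - p) - ξ ^ (s - p)) / (s - p)) + T) := by
    rw [hcdef, hC']
    have h1' : p ≠ 0 := hp0.ne'
    have h2' : p - s ≠ 0 := hps.ne'
    have h3' : s - p ≠ 0 := by intro h; apply hps.ne'; linarith
    field_simp
    ring
  calc (0:ℝ) < c * ξ ^ (s - p) + C' := hkey
    _ = (B - ε) * ξ ^ (s - p) / p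
        - ((B + ε) * ((η ^ (s - p) - ξ ^ (s - p)) / (s - p)) + T) := halg
    _ ≤ (L ξ - A) * (ξ ^ (-p) / p)
        - ((∫ x in Set.Ioc ξ η, (L x - A) / x ^ (r + 1)) + T) := by linarith
    _ = ∫ x in Set.Ioi ξ, (L ξ - L x) / x ^ (r + 1) := by rw [hsplit, htails]
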